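/- The language of 1-prefix normal binary words is not context-free. -/

import Mathlib

universe uT uN
variable {T : Type uT} {N : Type uN}

inductive PT (T : Type uT) (N : Type uN) where
  | leaf : T → PT T N
  | node : N → List (PT T N) → PT T N

namespace PT

lemma my_ind {P : PT T N → Prop} (hleaf : ∀ t, P (.leaf t))
    (hnode : ∀ n c, (∀ t ∈ c, P t) → P (.node n c)) : ∀ t, P t
  | .leaf t => hleaf t
  | .node n c => hnode n c (fun t ht => my_ind hleaf hnode t)
termination_by t => sizeOf t
decreasing_by
  have := List.sizeOf_lt_of_mem ht
  simp only [node.sizeOf_spec]; omega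

def sym : PT T N → Symbol T N
  | .leaf t => .terminal t
  | .node n _ => .nonterminal n

def yield : PT T N → List T
  | .leaf t => [t]
  | .node _ c => (c.attach.map (fun x => x.1.yield)).flatten
termination_by t => sizeOf t
decreasing_by
  have := List.sizeOf_lt_of_mem x.2
  simp only [node.sizeOf_spec]; omega

lemma yield_node (n : N) (c : List (PT T N)) :
    (node n c : PT T N).yield = (c.map yield).flatten := by
  rw [yield]
  congr 1
  simp [List.attach_map_val]

def size : PT T N → ℕ
  | .leaf _ => 1
  | .node _ c => (c.attach.map (fun x => x.1.size)).sum + 1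
termination_by t => sizeOf t
decreasing_by
  have := List.sizeOf_lt_of_mem x.2
  simp only [node.sizeOf_spec]; omega

lemma size_node (n : N) (c : List (PT T N)) :
    (node n c : PT T N).size = (c.map size).sum + 1 := by
  rw [size]; congr 1; simp [List.attach_map_val]

def height : PT T N → ℕ
  | .leaf _ => 0
  | .node _ c => (c.attach.map (fun x => x.1.height)).foldr max 0 + 1
termination_by t => sizeOf t
decreasing_by
  have := List.sizeOf_lt_of_mem x.2
  simp only [node.sizeOf_spec]; omega

lemma height_node (n : N) (c : List (PT T N)) :
    (node n c : PT T N).height = (c.map height).foldr max 0 + 1 := by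
  rw [height]; congr 1; simp [List.attach_map_val]

end PT

-- ===== helpers =====
lemma le_foldr_max {l : List ℕ} {x : ℕ} (hx : x ∈ l) : x ≤ l.foldr max 0 := by
  induction l with
  | nil => simp at hx
  | cons a l ih =>
    rcases List.mem_cons.1 hx with rfl | h
    · exact le_max_left _ _
    · exact le_trans (ih h) (le_max_right _ _)

lemma foldr_max_le {l : List ℕ} {b : ℕ} (h : ∀ x ∈ l, x ≤ b) : l.foldr max 0 ≤ b := by
  induction l with
  | nil => simp
  | cons a l ih =>
    simp only [List.foldr_cons, max_le_iff]
    exact ⟨h a (by simp), ih fun x hx => h x (List.mem_cons_of_mem _ hx)⟩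

lemma foldr_max_eq {l : List ℕ} {x : ℕ} (hx : x ∈ l) (h : ∀ y ∈ l, y ≤ x) :
    l.foldr max 0 = x :=
  le_antisymm (foldr_max_le h) (le_foldr_max hx)

lemma mem_foldr_union {α : Type*} [DecidableEq α] {L : List (Finset α)} {x : α} :
    x ∈ L.foldr (· ∪ ·) ∅ ↔ ∃ S ∈ L, x ∈ S := by
  induction L with
  | nil => simp
  | cons a l ih => simp [ih]

lemma subset_foldr_union {α : Type*} [DecidableEq α] {L : List (Finset α)} {S : Finset α}
    (hS : S ∈ L) : S ⊆ L.foldr (· ∪ ·) ∅ := by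
  induction L with
  | nil => simp at hS
  | cons a l ih =>
    rcases List.mem_cons.1 hS with rfl | h
    · exact Finset.subset_union_left
    · exact (ih h).trans Finset.subset_union_right

namespace PT

noncomputable def labelsF [DecidableEq N] : PT T N → Finset N
  | .leaf _ => ∅
  | .node n c => insert n ((c.attach.map (fun x => x.1.labelsF)).foldr (· ∪ ·) ∅)
termination_by t => sizeOf t
decreasing_by
  have := List.sizeOf_lt_of_mem x.2
  simp only [node.sizeOf_spec]; omega

lemma labelsF_node [DecidableEq N] (n : N) (c : List (PT T N)) :
    (node n c : PT T N).labelsF = insert n ((c.map labelsF).foldr (· ∪ ·) ∅) := by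
  rw [labelsF]; congr 1; simp [List.attach_map_val]

lemma self_mem_labelsF [DecidableEq N] (n : N) (c : List (PT T N)) :
    n ∈ (node n c : PT T N).labelsF := by
  rw [labelsF_node]; exact Finset.mem_insert_self _ _

lemma labelsF_subset_of_mem [DecidableEq N] {t : PT T N} {c : List (PT T N)} (n : N)
    (ht : t ∈ c) : t.labelsF ⊆ (node n c : PT T N).labelsF := by
  rw [labelsF_node]
  exact (subset_foldr_union (List.mem_map_of_mem (f := labelsF) ht)).trans (Finset.subset_insert _ _)

noncomputable def spine : PT T N → List (PT T N)
  | .leaf _ => []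
  | .node n c =>
    .node n c :: (if h : (c.argmax height).isSome then ((c.argmax height).get h).spine else [])
termination_by t => sizeOf t
decreasing_by
  have := List.sizeOf_lt_of_mem (List.argmax_mem (Option.get_mem h))
  simp only [node.sizeOf_spec]; omega

lemma spine_leaf (t : T) : (leaf t : PT T N).spine = [] := by rw [spine]

lemma spine_node (n : N) (c : List (PT T N)) :
    (node n c : PT T N).spine =
      .node n c :: (if h : (c.argmax height).isSome then ((c.argmax height).get h).spine else []) := by
  rw [spine]

lemma height_argmax {c : List (PT T N)} {b : PT T N} (hb : c.argmax height = some b) :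
    (c.map height).foldr max 0 = b.height := by
  apply foldr_max_eq
  · exact List.mem_map_of_mem (f := height) (List.argmax_mem hb)
  · rintro y hy
    rcases List.mem_map.1 hy with ⟨s, hs, rfl⟩
    exact List.le_of_mem_argmax hs hb

lemma spine_length : ∀ t : PT T N, t.spine.length = t.height := by
  apply my_ind
  · intro t; rw [spine_leaf, height]; rfl
  · intro n c ih
    rw [spine_node, height_node]
    rcases h : c.argmax height with _ | b
    · have : c = [] := List.argmax_eq_none.1 h
      subst this; simp
    · simp only [h, Option.isSome_some, dif_pos, Option.get_some, List.length_cons]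
      rw [ih b (List.argmax_mem h), height_argmax h]

end PT

-- ===== well-formed trees for a grammar =====
open PT

variable {g : ContextFreeGrammar.{uT} T}

inductive WFT (g : ContextFreeGrammar.{uT} T) : PT T g.NT → Prop where
  | leaf (t : T) : WFT g (.leaf t)
  | node (r : ContextFreeRule T g.NT) (hr : r ∈ g.rules) (c : List (PT T g.NT))
      (hsym : c.map sym = r.output) (hc : ∀ t ∈ c, WFT g t) : WFT g (.node r.input c)

lemma derives_flat {c : List (PT T g.NT)}
    (h : ∀ t ∈ c, g.Derives [sym t] ((yield t).map Symbol.terminal)) :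
    g.Derives (c.map sym) (((c.map yield).flatten).map Symbol.terminal) := by
  induction c with
  | nil => simpa using ContextFreeGrammar.Derives.refl (g := g) []
  | cons a c ih =>
    simp only [List.map_cons, List.flatten_cons, List.map_append]
    have h1 : g.Derives (sym a :: c.map sym) (sym a :: ((c.map yield).flatten).map Symbol.terminal) := by
      have := (ih (fun t ht => h t (List.mem_cons_of_mem _ ht))).append_left [sym a]
      simpa using this
    refine h1.trans ?_
    have := (h a (by simp)).append_right (((c.map yield).flatten).map Symbol.terminal)
    simpa using this

lemma WFT.derives {t : PT T g.NT} (h : WFT g t) :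
    g.Derives [sym t] ((yield t).map Symbol.terminal) := by
  induction h with
  | leaf t => simp only [sym, yield, List.map_cons, List.map_nil]; rfl
  | node r hr c hsym hc ih =>
    have step : g.Produces [sym (PT.node r.input c)] r.output :=
      ⟨r, hr, by simpa [sym] using ContextFreeRule.Rewrites.input_output⟩
    rw [yield_node]
    exact step.trans_derives (hsym ▸ derives_flat ih)

lemma derives_to_forest {s : List (Symbol T g.NT)} {w : List T}
    (h : g.Derives s (w.map Symbol.terminal)) :
    ∃ c : List (PT T g.NT), c.map sym = s ∧ (c.map yield).flatten = w ∧ ∀ t ∈ c, WFT g t := by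
  induction h using Relation.ReflTransGen.head_induction_on with
  | refl =>
    refine ⟨w.map .leaf, ?_, ?_, ?_⟩
    · simp [sym]
    · induction w with
      | nil => simp
      | cons a w ih => simp_all [yield]
    · rintro t ht
      rcases List.mem_map.1 ht with ⟨a, _, rfl⟩
      exact WFT.leaf a
  | head hp _ ih =>
    rcases ih with ⟨c, hsym, hyield, hwf⟩
    rcases hp with ⟨r, hr, hrw⟩
    rcases hrw.exists_parts with ⟨p, q, rfl, rfl⟩
    -- c.map sym = p ++ r.output ++ q ; split c
    rw [List.append_assoc] at hsym
    rcases List.map_eq_append_iff.1 hsym with ⟨c₁, c₂₃, rfl, hc₁, hc₂₃⟩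
    rcases List.map_eq_append_iff.1 hc₂₃ with ⟨c₂, c₃, rfl, hc₂, hc₃⟩
    refine ⟨c₁ ++ (PT.node r.input c₂ :: c₃), ?_, ?_, ?_⟩
    · simp [hc₁, hc₃, sym]
    · simp only [List.map_append, List.map_cons, List.flatten_append, List.flatten_cons,
        yield_node] at hyield ⊢
      simpa using hyield
    · intro t ht
      rcases List.mem_append.1 ht with h1 | h2
      · exact hwf t (by simp [h1])
      · rcases List.mem_cons.1 h2 with rfl | h3
        · exact WFT.node r hr c₂ hc₂ (fun t ht => hwf t (by simp [ht]))
        · exact hwf t (by simp [h3])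

-- ===== plugging =====
def HasPlug (g : ContextFreeGrammar.{uT} T) (t s : PT T g.NT) : Prop :=
  ∃ u z : List T, t.yield = u ++ s.yield ++ z ∧
    ∀ s' : PT T g.NT, WFT g s' → s'.sym = s.sym →
      ∃ t' : PT T g.NT, WFT g t' ∧ t'.sym = t.sym ∧ t'.yield = u ++ s'.yield ++ z ∧
        t'.size + s.size = t.size + s'.size

lemma HasPlug.rfl (t : PT T g.NT) : HasPlug g t t :=
  ⟨[], [], by simp, fun s' h hs => ⟨s', h, hs, by simp, by omega⟩⟩

lemma HasPlug.comp {t s r : PT T g.NT} (h1 : HasPlug g t s) (h2 : HasPlug g s r) :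
    HasPlug g t r := by
  rcases h1 with ⟨u1, z1, hy1, hp1⟩
  rcases h2 with ⟨u2, z2, hy2, hp2⟩
  refine ⟨u1 ++ u2, z2 ++ z1, by simp [hy1, hy2], ?_⟩
  intro s' hwf hsym
  rcases hp2 s' hwf hsym with ⟨m, hm1, hm2, hm3, hm4⟩
  rcases hp1 m hm1 hm2 with ⟨t', ht1, ht2, ht3, ht4⟩
  exact ⟨t', ht1, ht2, by simp [ht3, hm3], by omega⟩

lemma hasPlug_child {n : g.NT} {c : List (PT T g.NT)} {b : PT T g.NT}
    (hw : WFT g (.node n c)) (hb : b ∈ c) : HasPlug g (.node n c) b := by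
  rcases List.append_of_mem hb with ⟨c₁, c₂, rfl⟩
  cases hw with
  | node r hr c' hsymc hc =>
    refine ⟨(c₁.map yield).flatten, (c₂.map yield).flatten, by simp [yield_node], ?_⟩
    intro s' hwf hsym
    refine ⟨.node r.input (c₁ ++ s' :: c₂), ?_, by simp [sym], ?_, ?_⟩
    · refine WFT.node r hr _ ?_ ?_
      · simpa [hsym] using hsymc
      · intro t ht
        rcases List.mem_append.1 ht with h1 | h2
        · exact hc t (by simp [h1])
        · rcases List.mem_cons.1 h2 with rfl | h3
          · exact hwf
          · exact hc t (by simp [h3])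
    · simp [yield_node, hsym]
    · simp only [size_node, List.map_append, List.map_cons, List.sum_append, List.sum_cons]
      omega

lemma size_lt_of_mem {n : N} {c : List (PT T N)} {b : PT T N} (hb : b ∈ c) :
    b.size < (PT.node n c : PT T N).size := by
  rw [size_node]
  have : b.size ≤ (c.map size).sum := List.single_le_sum (by simp) _ (List.mem_map_of_mem (f := size) hb)
  omega

-- spine member properties
def SR (g : ContextFreeGrammar.{uT} T) (a b : PT T g.NT) : Prop :=
  HasPlug g a b ∧ b.size < a.size

lemma spine_mem_rel : ∀ t : PT T g.NT, WFT g t → ∀ s ∈ t.spine, s = t ∨ SR g t s := by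
  apply my_ind
  · intro t _ s hs; rw [spine_leaf] at hs; simp at hs
  · intro n c ih hwf s hs
    rw [spine_node] at hs
    rcases List.mem_cons.1 hs with rfl | hs'
    · exact Or.inl rfl
    · right
      rcases h : (c.argmax height) with _ | b
      · simp [h] at hs'
      · simp only [h, Option.isSome_some, dif_pos, Option.get_some] at hs'
        have hbc : b ∈ c := List.argmax_mem h
        have hwb : WFT g b := by cases hwf with | node r hr c' hsymc hc => exact hc b hbc
        have hRb : SR g (.node n c) b := ⟨hasPlug_child hwf hbc, size_lt_of_mem hbc⟩
        rcases ih b hbc hwb s hs' with rfl | ⟨hp, hsz⟩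
        · exact hRb
        · exact ⟨hRb.1.comp hp, lt_trans hsz hRb.2⟩

lemma spine_pairwise : ∀ t : PT T g.NT, WFT g t → List.Pairwise (SR g) t.spine := by
  apply my_ind
  · intro t _; rw [spine_leaf]; exact List.Pairwise.nil
  · intro n c ih hwf
    rw [spine_node]
    rcases h : (c.argmax height) with _ | b
    · simp [h]
    · simp only [h, Option.isSome_some, dif_pos, Option.get_some]
      have hbc : b ∈ c := List.argmax_mem h
      have hwb : WFT g b := by cases hwf with | node r hr c' hsymc hc => exact hc b hbc
      have hRb : SR g (.node n c) b := ⟨hasPlug_child hwf hbc, size_lt_of_mem hbc⟩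
      refine List.Pairwise.cons ?_ (ih b hbc hwb)
      intro s hs
      rcases spine_mem_rel b hwb s hs with rfl | ⟨hp, hsz⟩
      · exact hRb
      · exact ⟨hRb.1.comp hp, lt_trans hsz hRb.2⟩

lemma spine_mem_props [DecidableEq N] :
    ∀ t : PT T N, ∀ s ∈ t.spine, (∃ m c, s = PT.node m c) ∧ s.labelsF ⊆ t.labelsF := by
  apply my_ind
  · intro t s hs; rw [spine_leaf] at hs; simp at hs
  · intro n c ih s hs
    rw [spine_node] at hs
    rcases List.mem_cons.1 hs with rfl | hs'
    · exact ⟨⟨n, c, rfl⟩, subset_rfl⟩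
    · rcases h : (c.argmax height) with _ | b
      · simp [h] at hs'
      · simp only [h, Option.isSome_some, dif_pos, Option.get_some] at hs'
        have hbc : b ∈ c := List.argmax_mem h
        rcases ih b hbc s hs' with ⟨hnode, hsub⟩
        exact ⟨hnode, hsub.trans (labelsF_subset_of_mem n hbc)⟩

lemma spine_wf : ∀ t : PT T g.NT, WFT g t → ∀ s ∈ t.spine, WFT g s := by
  apply my_ind
  · intro t _ s hs; rw [spine_leaf] at hs; simp at hs
  · intro n c ih hwf s hs
    rw [spine_node] at hs
    rcases List.mem_cons.1 hs with rfl | hs'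
    · exact hwf
    · rcases h : (c.argmax height) with _ | b
      · simp [h] at hs'
      · simp only [h, Option.isSome_some, dif_pos, Option.get_some] at hs'
        have hbc : b ∈ c := List.argmax_mem h
        have hwb : WFT g b := by cases hwf with | node r hr c' hsymc hc => exact hc b hbc
        exact ih b hbc hwb s hs'

lemma spine_suffix : ∀ t : PT T N, ∀ l₁ (s : PT T N) l₂, t.spine = l₁ ++ s :: l₂ →
    s.spine = s :: l₂ := by
  apply my_ind
  · intro t l₁ s l₂ h; rw [spine_leaf] at h; simp at h
  · intro n c ih l₁ s l₂ h
    rw [spine_node] at h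
    match l₁, h with
    | [], h =>
      simp only [List.nil_append, List.cons.injEq] at h
      obtain ⟨h1, h2⟩ := h
      subst h2
      rw [← h1, spine_node]
    | (a :: l₁'), h =>
      simp only [List.cons_append, List.cons.injEq] at h
      rcases hm : (c.argmax height) with _ | b
      · rw [hm] at h; simp at h
      · rw [hm] at h
        simp only [Option.isSome_some, dif_pos, Option.get_some] at h
        exact ih b (List.argmax_mem hm) l₁' s l₂ h.2

-- ===== yield length bound =====
lemma yield_le_pow {K : ℕ} (hK : 1 ≤ K) (hrules : ∀ r ∈ g.rules, r.output.length ≤ K) :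
    ∀ t : PT T g.NT, WFT g t → (yield t).length ≤ K ^ t.height := by
  apply my_ind
  · intro t _; rw [yield, height]; simp
  · intro n c ih hwf
    cases hwf with
    | node r hr c' hsymc hc =>
      rw [yield_node, height_node, List.length_flatten]
      have hlen : c.length ≤ K := by
        have := congrArg List.length hsymc
        simp only [List.length_map] at this
        rw [this]; exact hrules r hr
      set H := (c.map height).foldr max 0 with hH
      have hbound : ∀ x ∈ (c.map yield).map List.length, x ≤ K ^ H := by
        intro x hx
        rcases List.mem_map.1 hx with ⟨l, hl, rfl⟩
        rcases List.mem_map.1 hl with ⟨s, hs, rfl⟩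
        calc s.yield.length ≤ K ^ s.height := ih s hs (hc s hs)
          _ ≤ K ^ H := Nat.pow_le_pow_right hK (le_foldr_max (List.mem_map_of_mem (f := height) hs))
      calc ((c.map yield).map List.length).sum
          ≤ ((c.map yield).map List.length).length * K ^ H :=
            by simpa using List.sum_le_card_nsmul _ _ hbound
        _ ≤ K * K ^ H := by
            apply Nat.mul_le_mul_right
            simpa using hlen
        _ = K ^ (H + 1) := by ring

-- ===== label bound =====
def symNT : Symbol T N → Option N
  | .terminal _ => none
  | .nonterminal n => some n

lemma labels_sub [DecidableEq g.NT] :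
    ∀ t : PT T g.NT, WFT g t → ∀ n c, t = PT.node n c →
      t.labelsF ⊆ insert n (g.rules.sup fun r => (r.output.filterMap symNT).toFinset) := by
  apply my_ind
  · intro t _ n c h; exact absurd h (by simp [PT.leaf.injEq])
  · intro n₀ c₀ ih hwf n c heq
    obtain ⟨rfl, rfl⟩ : n₀ = n ∧ c₀ = c := by
      injection heq with h1 h2; exact ⟨h1, h2⟩
    cases hwf with
    | node r hr c' hsymc hc =>
      rw [labelsF_node]
      intro a ha
      rcases Finset.mem_insert.1 ha with rfl | ha'
      · exact Finset.mem_insert_self _ _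
      · refine Finset.mem_insert_of_mem ?_
        rcases mem_foldr_union.1 ha' with ⟨Sx, hSx, haSx⟩
        rcases List.mem_map.1 hSx with ⟨s, hs, rfl⟩
        cases s with
        | leaf t => rw [labelsF] at haSx; simp at haSx
        | node n₁ c₁ =>
          have hn₁ : n₁ ∈ (g.rules.sup fun r => (r.output.filterMap symNT).toFinset) := by
            have hsymmem : Symbol.nonterminal n₁ ∈ r.output := by
              rw [← hsymc]
              exact List.mem_map.2 ⟨_, hs, rfl⟩
            have : n₁ ∈ (r.output.filterMap symNT).toFinset := by
              simp only [List.mem_toFinset, List.mem_filterMap]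
              exact ⟨_, hsymmem, rfl⟩
            exact (Finset.le_sup (f := fun r => (r.output.filterMap symNT).toFinset) hr) this
          have := ih _ hs (hc _ hs) n₁ c₁ rfl haSx
          rcases Finset.mem_insert.1 this with rfl | h2
          · exact hn₁
          · exact h2

-- ===== pumping =====
def rootD (g : ContextFreeGrammar.{uT} T) : PT T g.NT → g.NT
  | .leaf _ => g.initial
  | .node n _ => n

lemma cfg_pump (g : ContextFreeGrammar.{uT} T) :
    ∃ p : ℕ, 0 < p ∧ ∀ w ∈ g.language, p ≤ w.length →
      ∃ u v x y z : List T, w = u ++ v ++ x ++ y ++ z ∧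
        v.length + x.length + y.length ≤ p ∧ 1 ≤ v.length + y.length ∧
        u ++ x ++ z ∈ g.language ∧ u ++ v ++ v ++ x ++ y ++ y ++ z ∈ g.language := by
  classical
  set K := max (g.rules.sup fun r => r.output.length) 2 with hKdef
  have hK1 : 1 ≤ K := by rw [hKdef]; exact le_trans (by norm_num) (le_max_right _ _)
  have hKr : ∀ r ∈ g.rules, r.output.length ≤ K := by
    intro r hr
    rw [hKdef]
    exact le_trans (Finset.le_sup (f := fun r => r.output.length) hr) (le_max_left _ _)
  set S : Finset g.NT :=
    insert g.initial (g.rules.sup fun r => (r.output.filterMap symNT).toFinset) with hSdef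
  set m := S.card with hmdef
  refine ⟨K ^ (m + 1) + 1, by positivity, ?_⟩
  intro w hw hlen
  rw [ContextFreeGrammar.mem_language_iff] at hw
  -- get a minimal tree
  have hex : ∃ k, ∃ t : PT T g.NT, WFT g t ∧ sym t = .nonterminal g.initial ∧
      yield t = w ∧ t.size = k := by
    rcases derives_to_forest hw with ⟨c, hsym, hyield, hwfc⟩
    rcases c with _ | ⟨t, _ | ⟨t2, c⟩⟩
    · simp at hsym
    · simp only [List.map_cons, List.map_nil, List.cons.injEq, and_true] at hsym
      exact ⟨t.size, t, hwfc t (by simp), hsym, by simpa using hyield, rfl⟩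
    · have := congrArg List.length hsym
      simp at this
  obtain ⟨t, hwf, hsymt, hyieldt, hsizet⟩ := Nat.find_spec hex
  have hmin : ∀ t' : PT T g.NT, WFT g t' → sym t' = .nonterminal g.initial →
      yield t' = w → t.size ≤ t'.size := by
    intro t' h1 h2 h3
    rw [hsizet]
    exact Nat.find_min' hex ⟨t', h1, h2, h3, rfl⟩
  clear hsizet
  -- t is a node with label = initial
  obtain ⟨n₀, c₀, rfl⟩ : ∃ n₀ c₀, t = PT.node n₀ c₀ := by
    cases t with
    | leaf tt => simp [sym] at hsymt
    | node n₀ c₀ => exact ⟨n₀, c₀, rfl⟩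
  set t := PT.node n₀ c₀ with htdef
  have hn₀ : n₀ = g.initial := by simpa [sym, htdef] using hsymt
  -- height bound
  have hyb : w.length ≤ K ^ t.height := hyieldt ▸ yield_le_pow hK1 hKr t hwf
  have hht : m + 1 ≤ t.height := by
    by_contra hcon
    have : K ^ t.height ≤ K ^ m := Nat.pow_le_pow_right hK1 (by omega)
    have : K ^ m ≤ K ^ (m+1) := Nat.pow_le_pow_right hK1 (by omega)
    omega
  set sp := t.spine with hspdef
  have hspl : sp.length = t.height := spine_length t
  set L := sp.length with hLdef
  have hLm : m + 1 ≤ L := by omega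
  set dflt : PT T g.NT := PT.node g.initial [] with hdflt
  set f : ℕ → g.NT := fun j => rootD g (sp.getD (L - 1 - j) dflt) with hf
  -- every spine element's root is in S
  have hspS : ∀ s ∈ sp, (∃ n' c', s = PT.node n' c' ∧ n' ∈ S) := by
    intro s hs
    rcases spine_mem_props t s hs with ⟨⟨n', c', rfl⟩, hsub⟩
    refine ⟨n', c', rfl, ?_⟩
    have h1 : n' ∈ (PT.node n' c').labelsF := self_mem_labelsF n' c'
    have h2 := hsub h1
    have := labels_sub _ hwf n₀ c₀ rfl h2
    rw [hn₀] at this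
    exact this
  have hmaps : ∀ j ∈ Finset.range (m + 1), f j ∈ S := by
    intro j hj
    have hidx : L - 1 - j < L := by omega
    have hmem : sp.getD (L - 1 - j) dflt ∈ sp := by
      rw [List.getD_eq_getElem _ _ hidx]
      exact List.getElem_mem _
    rcases hspS _ hmem with ⟨n', c', heq, hn'⟩
    rw [hf]
    simp only [heq, rootD]
    exact hn'
  have hcard : S.card < (Finset.range (m+1)).card := by simp [hmdef]
  obtain ⟨i, hi, j, hj, hij, hfij⟩ := Finset.exists_ne_map_eq_of_card_lt_of_maps_to hcard hmaps
  -- wlog i < j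
  wlog hlt : i < j generalizing i j
  · exact this j hj i hi (Ne.symm hij) hfij.symm (by omega)
  simp only [Finset.mem_range] at hi hj
  set a := L - 1 - j with ha
  set b := L - 1 - i with hb
  have hab : a < b := by omega
  have hbL : b < L := by omega
  have haL : a < L := by omega
  set t₁ := sp.get ⟨a, haL⟩ with ht₁
  set t₂ := sp.get ⟨b, hbL⟩ with ht₂
  have hpair : SR g t₁ t₂ := by
    have := spine_pairwise t hwf
    exact (List.pairwise_iff_get.1 this) ⟨a, haL⟩ ⟨b, hbL⟩ (by exact hab)
  have ht₁mem : t₁ ∈ sp := List.get_mem _ _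
  have ht₂mem : t₂ ∈ sp := List.get_mem _ _
  have hplug_t : HasPlug g t t₁ := by
    rcases spine_mem_rel t hwf t₁ ht₁mem with h | h
    · rw [h]; exact HasPlug.rfl t
    · exact h.1
  have hwf1 : WFT g t₁ := spine_wf t hwf t₁ ht₁mem
  have hwf2 : WFT g t₂ := spine_wf t hwf t₂ ht₂mem
  -- same root symbol
  have hsym12 : sym t₂ = sym t₁ := by
    rcases hspS t₁ ht₁mem with ⟨n₁, c₁, he₁, _⟩
    rcases hspS t₂ ht₂mem with ⟨n₂, c₂, he₂, _⟩
    have e1 : f j = n₁ := by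
      rw [hf]; simp only [← ha]
      rw [List.getD_eq_getElem _ _ haL]
      rw [show sp[a] = t₁ from rfl, he₁, rootD]
    have e2 : f i = n₂ := by
      rw [hf]; simp only [← hb]
      rw [List.getD_eq_getElem _ _ hbL]
      rw [show sp[b] = t₂ from rfl, he₂, rootD]
    rw [he₁, he₂, sym, sym]
    rw [← e1, ← e2, hfij]
  -- height of t₁
  have hheight1 : t₁.height ≤ m + 1 := by
    have hsplit : sp = sp.take a ++ t₁ :: sp.drop (a+1) := by
      conv_lhs => rw [← List.take_append_drop a sp, List.drop_eq_getElem_cons haL]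
      rfl
    have := spine_suffix t (sp.take a) t₁ (sp.drop (a+1)) hsplit
    have hlen1 : t₁.spine.length = (sp.drop (a+1)).length + 1 := by rw [this]; simp
    rw [spine_length t₁] at hlen1
    rw [List.length_drop] at hlen1
    omega
  have hyield1 : t₁.yield.length ≤ K ^ (m+1) :=
    le_trans (yield_le_pow hK1 hKr t₁ hwf1)
      (Nat.pow_le_pow_right hK1 hheight1)
  -- decompositions
  obtain ⟨u, z, hyt, plug_outer⟩ := hplug_t
  obtain ⟨v, y, hy1, plug_inner⟩ := hpair.1
  refine ⟨u, v, t₂.yield, y, z, ?_, ?_, ?_, ?_, ?_⟩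
  · rw [← hyieldt, hyt, hy1]; simp
  · have : v.length + t₂.yield.length + y.length = t₁.yield.length := by
      rw [hy1]; simp; omega
    omega
  · -- 1 ≤ |v| + |y| by minimality
    by_contra hcon
    push_neg at hcon
    have hv : v = [] := List.length_eq_zero_iff.1 (by omega)
    have hy : y = [] := List.length_eq_zero_iff.1 (by omega)
    obtain ⟨t', h1, h2, h3, h4⟩ := plug_outer t₂ hwf2 hsym12
    have hsz : t'.size < t.size := by have := hpair.2; omega
    have hyw : t'.yield = w := by
      rw [h3, ← hyieldt, hyt, hy1, hv, hy]; simp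
    have := hmin t' h1 (by rw [h2, hsymt]) hyw
    omega
  · -- u ++ x ++ z ∈ language
    obtain ⟨t', h1, h2, h3, _⟩ := plug_outer t₂ hwf2 hsym12
    rw [ContextFreeGrammar.mem_language_iff]
    have := WFT.derives h1
    rw [h2, hsymt, h3] at this
    simpa using this
  · -- pumped twice
    obtain ⟨T₂, k1, k2, k3, _⟩ := plug_inner t₁ hwf1 hsym12.symm
    obtain ⟨t', h1, h2, h3, _⟩ := plug_outer T₂ k1 k2
    rw [ContextFreeGrammar.mem_language_iff]
    have := WFT.derives h1
    rw [h2, hsymt, h3, k3, hy1] at this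
    simpa using this


/-- `w` is 1-prefix normal: no factor of `w` has more 1s than the prefix of the same length. -/
def IsPrefixNormal1 (w : List Bool) : Prop :=
  ∀ v : List Bool, v <:+: w → v.count true ≤ (w.take v.length).count true


local notation "R" => fun n => List.replicate n true

lemma cnt_rep (d : ℕ) : (List.replicate d true).count true = d := by
  simp [List.count_replicate]

lemma cnt_take_rep (k d : ℕ) : ((List.replicate d true).take k).count true = min k d := by
  rw [List.take_replicate]; simp [List.count_replicate]

lemma cnt_take_false (k : ℕ) (s : List Bool) :
    (([false] ++ s).take k).count true = (s.take (k - 1)).count true := by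
  cases k with
  | zero => simp
  | succ k => simp [List.take_succ_cons]

lemma cntST (a k : ℕ) (s : List Bool) :
    ((List.replicate a true ++ s).take k).count true
      = min k a + (s.take (k - a)).count true := by
  rw [List.take_append, List.count_append, cnt_take_rep]
  simp

lemma STF (a k : ℕ) (s : List Bool) :
    ((List.replicate a true ++ ([false] ++ s)).take k).count true
      = min k a + (s.take (k - a - 1)).count true := by
  rw [cntST, cnt_take_false]

lemma cnt2 (A B k : ℕ) :
    ((R A ++ ([false] ++ R B)).take k).count true = min k A + min (k - A - 1) B := by
  rw [STF, cnt_take_rep]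

lemma cnt3 (A B C k : ℕ) :
    ((R A ++ ([false] ++ (R B ++ ([false] ++ R C)))).take k).count true
      = min k A + (min (k - A - 1) B + min (k - A - 1 - B - 1) C) := by
  rw [STF, STF, cnt_take_rep]

lemma cnt4 (A B C D k : ℕ) :
    ((R A ++ ([false] ++ (R B ++ ([false] ++ (R C ++ ([false] ++ R D)))))).take k).count true
      = min k A + (min (k - A - 1) B + (min (k - A - 1 - B - 1) C
          + min (k - A - 1 - B - 1 - C - 1) D)) := by
  rw [STF, STF, STF, cnt_take_rep]

lemma not_pn_of_witness {w pre f suf : List Bool} (h : w = pre ++ (f ++ suf))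
    (hcnt : (w.take f.length).count true < f.count true) : ¬ IsPrefixNormal1 w := by
  intro hpn
  have hinf : f <:+: w := ⟨pre, suf, by rw [h]; simp⟩
  exact absurd (hpn f hinf) (by omega)

lemma NPN1 {A B : ℕ} (h : A < B) :
    ¬ IsPrefixNormal1 (R A ++ ([false] ++ R B)) := by
  apply not_pn_of_witness (pre := R A ++ [false]) (f := R B) (suf := []) (by simp)
  rw [cnt2]
  simp only [List.length_replicate, cnt_rep]
  omega

lemma NPN2 {A B C : ℕ} (h : A < B) :
    ¬ IsPrefixNormal1 (R A ++ ([false] ++ (R B ++ ([false] ++ R C)))) := by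
  apply not_pn_of_witness (pre := R A ++ [false]) (f := R B) (suf := [false] ++ R C) (by simp)
  rw [cnt3]
  simp only [List.length_replicate, cnt_rep]
  omega

lemma NPN3 {A B C : ℕ} (h : A < C) :
    ¬ IsPrefixNormal1 (R A ++ ([false] ++ (R B ++ ([false] ++ R C)))) := by
  apply not_pn_of_witness (pre := R A ++ ([false] ++ (R B ++ [false]))) (f := R C) (suf := [])
    (by simp)
  rw [cnt3]
  simp only [List.length_replicate, cnt_rep]
  omega

lemma NPN4 {A B C D : ℕ} (h1 : A + B + 1 ≤ C + D) (h2 : D ≤ A + B + 1) :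
    ¬ IsPrefixNormal1 (R A ++ ([false] ++ (R B ++ ([false] ++ (R C ++ ([false] ++ R D)))))) := by
  apply not_pn_of_witness (pre := R A ++ ([false] ++ (R B ++ [false])))
    (f := R C ++ ([false] ++ R D)) (suf := []) (by simp)
  rw [cnt4]
  simp only [List.length_append, List.length_replicate, List.length_cons, List.length_nil,
    List.count_append, cnt_rep]
  simp only [List.count_cons, List.count_nil]
  omega

lemma pn_www (p : ℕ) : IsPrefixNormal1 (R p ++ ([false] ++ (R p ++ ([false] ++ R p)))) := by
  intro v hv
  obtain ⟨x, y, hxy⟩ := hv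
  set w : List Bool := R p ++ ([false] ++ (R p ++ ([false] ++ R p))) with hw
  have hwl : w.length = 3 * p + 2 := by
    rw [hw]
    simp only [List.length_append, List.length_replicate, List.length_cons, List.length_nil]
    omega
  have hlen : x.length + v.length + y.length = 3 * p + 2 := by
    have := congrArg List.length hxy
    simp only [List.length_append] at this
    omega
  have hx : w.take x.length = x := by
    rw [← hxy, List.append_assoc, List.take_left]
  have hxv : w.take (x.length + v.length) = x ++ v := by
    rw [← hxy]
    rw [show x ++ v ++ y = (x ++ v) ++ y by simp]
    rw [← List.length_append (as := x) (bs := v), List.take_left]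
  have e1 := congrArg (List.count true) hx
  have e2 := congrArg (List.count true) hxv
  rw [cnt3] at e1 e2
  rw [List.count_append] at e2
  rw [cnt3]
  omega

lemma TKa {k a : ℕ} (h : k ≤ a) (s : List Bool) :
    (List.replicate a true ++ s).take k = List.replicate k true := by
  rw [List.take_append_of_le_length (by simpa using h), List.take_replicate, min_eq_left h]

lemma TKb {k a : ℕ} (h : a ≤ k) (s : List Bool) :
    (List.replicate a true ++ s).take k = List.replicate a true ++ s.take (k - a) := by
  rw [List.take_append, List.take_of_length_le (by simpa using h)]
  simp

lemma TKf {k : ℕ} (h : 1 ≤ k) (s : List Bool) :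
    (([false] : List Bool) ++ s).take k = [false] ++ s.take (k - 1) := by
  cases k with
  | zero => omega
  | succ k => simp [List.take_succ_cons]

lemma DRa {k a : ℕ} (h : k ≤ a) (s : List Bool) :
    (List.replicate a true ++ s).drop k = List.replicate (a - k) true ++ s := by
  rw [List.drop_append, List.drop_replicate]
  have : k - (List.replicate a true).length = 0 := by simpa using by omega
  rw [this, List.drop_zero]

lemma DRb {k a : ℕ} (h : a ≤ k) (s : List Bool) :
    (List.replicate a true ++ s).drop k = s.drop (k - a) := by
  rw [List.drop_append, List.drop_replicate]
  have h1 : a - k = 0 := by omega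
  rw [h1]
  simp

lemma DRf {k : ℕ} (h : 1 ≤ k) (s : List Bool) :
    (([false] : List Bool) ++ s).drop k = s.drop (k - 1) := by
  cases k with
  | zero => omega
  | succ k => simp [List.drop_succ_cons]

lemma RR (a b : ℕ) (s : List Bool) :
    List.replicate a true ++ (List.replicate b true ++ s) = List.replicate (a+b) true ++ s := by
  rw [← List.append_assoc, ← List.replicate_add]

lemma RR2 (a b : ℕ) :
    List.replicate a true ++ List.replicate b true = List.replicate (a+b) true := by
  rw [← List.replicate_add]

def W3 (p : ℕ) : List Bool :=
  List.replicate p true ++ ([false] ++ (List.replicate p true ++ ([false] ++ List.replicate p true)))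

lemma takeZ1 {p c : ℕ} (h : c ≤ p) : (W3 p).take c = List.replicate c true := TKa h _

lemma takeZ2 {p c : ℕ} (h1 : p + 1 ≤ c) (h2 : c ≤ 2*p+1) :
    (W3 p).take c = List.replicate p true ++ ([false] ++ List.replicate (c - (p+1)) true) := by
  rw [W3, TKb (by omega), TKf (by omega), TKa (by omega),
    show c - p - 1 = c - (p+1) from by omega]

lemma takeZ3 {p c : ℕ} (h1 : 2*p+2 ≤ c) :
    (W3 p).take c = List.replicate p true ++ ([false] ++ (List.replicate p true
      ++ ([false] ++ List.replicate (min (c - (2*p+2)) p) true))) := by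
  rw [W3, TKb (by omega), TKf (by omega), TKb (by omega), TKf (by omega), List.take_replicate,
    show c - p - 1 - p - 1 = c - (2*p+2) from by omega]

lemma dropZ1 {p c : ℕ} (h : c ≤ p) :
    (W3 p).drop c = List.replicate (p - c) true
      ++ ([false] ++ (List.replicate p true ++ ([false] ++ List.replicate p true))) := DRa h _

lemma dropZ2 {p c : ℕ} (h1 : p + 1 ≤ c) (h2 : c ≤ 2*p+1) :
    (W3 p).drop c = List.replicate (2*p+1-c) true ++ ([false] ++ List.replicate p true) := by
  rw [W3, DRb (by omega), DRf (by omega), DRa (by omega)]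
  congr 2
  omega

lemma dropZ3 {p c : ℕ} (h1 : 2*p+2 ≤ c) :
    (W3 p).drop c = List.replicate (3*p+2-c) true := by
  rw [W3, DRb (by omega), DRf (by omega), DRb (by omega), DRf (by omega), List.drop_replicate]
  congr 1
  omega

lemma TKrep {k m : ℕ} (h : k ≤ m) : (List.replicate m true).take k = List.replicate k true := by
  rw [List.take_replicate, min_eq_left h]

set_option maxHeartbeats 1000000 in
lemma pump_contra (p : ℕ) (u v x y z : List Bool)
    (hsplit : W3 p = u ++ (v ++ (x ++ (y ++ z))))
    (hvxy : v.length + x.length + y.length ≤ p)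
    (hvy : 1 ≤ v.length + y.length)
    (h0 : IsPrefixNormal1 (u ++ (x ++ z)))
    (h2 : IsPrefixNormal1 (u ++ (v ++ (v ++ (x ++ (y ++ (y ++ z))))))) : False := by
  set a1 := u.length with ha1
  set l2 := v.length with hl2
  set l3 := x.length with hl3
  set l4 := y.length with hl4
  have hlenw : (W3 p).length = 3*p+2 := by
    rw [W3]
    simp only [List.length_append, List.length_replicate, List.length_cons, List.length_nil]
    omega
  have hlen : a1 + l2 + l3 + l4 + z.length = 3*p+2 := by
    have := congrArg List.length hsplit
    simp only [List.length_append] at this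
    omega
  have hu : (W3 p).take a1 = u := by rw [hsplit, List.take_left]
  have hd1 : (W3 p).drop a1 = v ++ (x ++ (y ++ z)) := by rw [hsplit, List.drop_left]
  have hv : ((W3 p).drop a1).take l2 = v := by rw [hd1, List.take_left]
  have hd2 : (W3 p).drop (a1+l2) = x ++ (y ++ z) := by
    rw [← List.drop_drop, hd1, List.drop_left]
  have hx : ((W3 p).drop (a1+l2)).take l3 = x := by rw [hd2, List.take_left]
  have hd3 : (W3 p).drop (a1+l2+l3) = y ++ z := by
    rw [← List.drop_drop, hd2, List.drop_left]
  have hy : ((W3 p).drop (a1+l2+l3)).take l4 = y := by rw [hd3, List.take_left]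
  have hz : (W3 p).drop (a1+l2+l3+l4) = z := by
    rw [← List.drop_drop, hd3, List.drop_left]
  rcases le_or_gt (a1+l2+l3+l4) p with hZ | hZ
  · -- case (1,1,1,1): pump down
    have hu' : u = List.replicate a1 true := by rw [← hu, takeZ1 (by omega)]
    have hx' : x = List.replicate l3 true := by
      rw [← hx, dropZ1 (by omega), TKa (by omega)]
    have hz' : z = List.replicate (p - (a1+l2+l3+l4)) true
        ++ ([false] ++ (List.replicate p true ++ ([false] ++ List.replicate p true))) := by
      rw [← hz, dropZ1 (by omega)]
    rw [hu', hx', hz'] at h0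
    simp only [List.append_assoc, RR, RR2] at h0
    exact NPN3 (by omega) h0
  · rcases le_or_gt (2*p+2) a1 with hZ3 | hZ3
    · -- case (3,3,3,3): pump up
      have hu' : u = List.replicate p true ++ ([false] ++ (List.replicate p true
          ++ ([false] ++ List.replicate (a1 - (2*p+2)) true))) := by
        rw [← hu, takeZ3 (by omega), show min (a1 - (2*p+2)) p = a1 - (2*p+2) from by omega]
      have hv' : v = List.replicate l2 true := by
        rw [← hv, dropZ3 (by omega), TKrep (by omega)]
      have hx' : x = List.replicate l3 true := by
        rw [← hx, dropZ3 (by omega), TKrep (by omega)]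
      have hy' : y = List.replicate l4 true := by
        rw [← hy, dropZ3 (by omega), TKrep (by omega)]
      have hz' : z = List.replicate (3*p+2 - (a1+l2+l3+l4)) true := by
        rw [← hz, dropZ3 (by omega)]
      rw [hu', hv', hx', hy', hz'] at h2
      simp only [List.append_assoc, RR, RR2] at h2
      exact NPN3 (by omega) h2
    · rcases le_or_gt a1 p with h1p | h1p
      · -- a1 in zone 1, a4 in zone 2 territory
        rcases le_or_gt (a1+l2) p with h2p | h2p
        · rcases le_or_gt (a1+l2+l3) p with h3p | h3p
          · -- case (1,1,1,2): pump up
            have hu' : u = List.replicate a1 true := by rw [← hu, takeZ1 (by omega)]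
            have hv' : v = List.replicate l2 true := by
              rw [← hv, dropZ1 (by omega), TKa (by omega)]
            have hx' : x = List.replicate l3 true := by
              rw [← hx, dropZ1 (by omega), TKa (by omega)]
            have hy' : y = List.replicate (p - (a1+l2+l3)) true
                ++ ([false] ++ List.replicate (a1+l2+l3+l4 - (p+1)) true) := by
              rw [← hy, dropZ1 (by omega), TKb (by omega), TKf (by omega), TKa (by omega),
                show l4 - (p - (a1+l2+l3)) - 1 = a1+l2+l3+l4 - (p+1) from by omega]
            have hz' : z = List.replicate (2*p+1 - (a1+l2+l3+l4)) true
                ++ ([false] ++ List.replicate p true) := by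
              rw [← hz, dropZ2 (by omega) (by omega)]
            rw [hu', hv', hx', hy', hz'] at h2
            simp only [List.append_assoc, RR, RR2] at h2
            exact NPN4 (by omega) (by omega) h2
          · -- case (1,1,2,2)
            have hu' : u = List.replicate a1 true := by rw [← hu, takeZ1 (by omega)]
            have hv' : v = List.replicate l2 true := by
              rw [← hv, dropZ1 (by omega), TKa (by omega)]
            have hx' : x = List.replicate (p - (a1+l2)) true
                ++ ([false] ++ List.replicate (a1+l2+l3 - (p+1)) true) := by
              rw [← hx, dropZ1 (by omega), TKb (by omega), TKf (by omega), TKa (by omega),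
                show l3 - (p - (a1+l2)) - 1 = a1+l2+l3 - (p+1) from by omega]
            have hz' : z = List.replicate (2*p+1 - (a1+l2+l3+l4)) true
                ++ ([false] ++ List.replicate p true) := by
              rw [← hz, dropZ2 (by omega) (by omega)]
            rcases Nat.eq_zero_or_pos l2 with hl2z | hl2z
            · -- v empty: pump up
              have hy' : y = List.replicate l4 true := by
                rw [← hy, dropZ2 (by omega) (by omega), TKa (by omega)]
              rw [hu', hv', hx', hy', hz'] at h2
              simp only [List.append_assoc, RR, RR2] at h2
              exact NPN2 (by omega) h2
            · -- v nonempty: pump down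
              rw [hu', hx', hz'] at h0
              simp only [List.append_assoc, RR, RR2] at h0
              exact NPN3 (by omega) h0
        · -- case (1,2,2,2): pump up
          have hu' : u = List.replicate a1 true := by rw [← hu, takeZ1 (by omega)]
          have hv' : v = List.replicate (p - a1) true
              ++ ([false] ++ List.replicate (a1+l2 - (p+1)) true) := by
            rw [← hv, dropZ1 (by omega), TKb (by omega), TKf (by omega), TKa (by omega),
              show l2 - (p - a1) - 1 = a1+l2 - (p+1) from by omega]
          have hx' : x = List.replicate l3 true := by
            rw [← hx, dropZ2 (by omega) (by omega), TKa (by omega)]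
          have hy' : y = List.replicate l4 true := by
            rw [← hy, dropZ2 (by omega) (by omega), TKa (by omega)]
          have hz' : z = List.replicate (2*p+1 - (a1+l2+l3+l4)) true
              ++ ([false] ++ List.replicate p true) := by
            rw [← hz, dropZ2 (by omega) (by omega)]
          rw [hu', hv', hx', hy', hz'] at h2
          simp only [List.append_assoc, RR, RR2] at h2
          exact NPN4 (by omega) (by omega) h2
      · -- a1 in zone 2 or beyond
        rcases le_or_gt (a1+l2+l3+l4) (2*p+1) with h4 | h4
        · -- case (2,2,2,2): pump up
          have hu' : u = List.replicate p true
              ++ ([false] ++ List.replicate (a1 - (p+1)) true) := by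
            rw [← hu, takeZ2 (by omega) (by omega)]
          have hv' : v = List.replicate l2 true := by
            rw [← hv, dropZ2 (by omega) (by omega), TKa (by omega)]
          have hx' : x = List.replicate l3 true := by
            rw [← hx, dropZ2 (by omega) (by omega), TKa (by omega)]
          have hy' : y = List.replicate l4 true := by
            rw [← hy, dropZ2 (by omega) (by omega), TKa (by omega)]
          have hz' : z = List.replicate (2*p+1 - (a1+l2+l3+l4)) true
              ++ ([false] ++ List.replicate p true) := by
            rw [← hz, dropZ2 (by omega) (by omega)]
          rw [hu', hv', hx', hy', hz'] at h2
          simp only [List.append_assoc, RR, RR2] at h2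
          exact NPN2 (by omega) h2
        · -- a4 in zone 3
          rcases le_or_gt (a1+l2) (2*p+1) with h2' | h2'
          · rcases le_or_gt (a1+l2+l3) (2*p+1) with h3' | h3'
            · -- case (2,2,2,3): pump down
              have hu' : u = List.replicate p true
                  ++ ([false] ++ List.replicate (a1 - (p+1)) true) := by
                rw [← hu, takeZ2 (by omega) (by omega)]
              have hx' : x = List.replicate l3 true := by
                rw [← hx, dropZ2 (by omega) (by omega), TKa (by omega)]
              have hz' : z = List.replicate (3*p+2 - (a1+l2+l3+l4)) true := by
                rw [← hz, dropZ3 (by omega)]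
              rw [hu', hx', hz'] at h0
              simp only [List.append_assoc, RR, RR2] at h0
              exact NPN1 (by omega) h0
            · -- case (2,2,3,3)
              have hu' : u = List.replicate p true
                  ++ ([false] ++ List.replicate (a1 - (p+1)) true) := by
                rw [← hu, takeZ2 (by omega) (by omega)]
              have hv' : v = List.replicate l2 true := by
                rw [← hv, dropZ2 (by omega) (by omega), TKa (by omega)]
              have hx' : x = List.replicate (2*p+1 - (a1+l2)) true
                  ++ ([false] ++ List.replicate (a1+l2+l3 - (2*p+2)) true) := by
                rw [← hx, dropZ2 (by omega) (by omega), TKb (by omega), TKf (by omega),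
                  TKrep (by omega),
                  show l3 - (2*p+1 - (a1+l2)) - 1 = a1+l2+l3 - (2*p+2) from by omega]
              have hy' : y = List.replicate l4 true := by
                rw [← hy, dropZ3 (by omega), TKrep (by omega)]
              have hz' : z = List.replicate (3*p+2 - (a1+l2+l3+l4)) true := by
                rw [← hz, dropZ3 (by omega)]
              rw [hu', hv', hx', hy', hz'] at h2
              simp only [List.append_assoc, RR, RR2] at h2
              rcases Nat.eq_zero_or_pos l2 with hl2z | hl2z
              · exact NPN3 (by omega) h2
              · exact NPN2 (by omega) h2
          · -- case (2,3,3,3): pump down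
            have hu' : u = List.replicate p true
                ++ ([false] ++ List.replicate (a1 - (p+1)) true) := by
              rw [← hu, takeZ2 (by omega) (by omega)]
            have hx' : x = List.replicate l3 true := by
              rw [← hx, dropZ3 (by omega), TKrep (by omega)]
            have hz' : z = List.replicate (3*p+2 - (a1+l2+l3+l4)) true := by
              rw [← hz, dropZ3 (by omega)]
            rw [hu', hx', hz'] at h0
            simp only [List.append_assoc, RR, RR2] at h0
            exact NPN1 (by omega) h0


theorem stmt_15 :
    ¬ Language.IsContextFree {w : List Bool | IsPrefixNormal1 w} := by
  rintro ⟨g, hg⟩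
  obtain ⟨p, hp0, hpump⟩ := cfg_pump g
  have hwmem : W3 p ∈ g.language := by
    rw [hg]
    exact pn_www p
  have hwlen : p ≤ (W3 p).length := by
    rw [W3]
    simp only [List.length_append, List.length_replicate, List.length_cons, List.length_nil]
    omega
  obtain ⟨u, v, x, y, z, hsplit, hvxy, hvy, h0, h2⟩ := hpump (W3 p) hwmem hwlen
  rw [hg] at h0 h2
  refine pump_contra p u v x y z ?_ hvxy hvy ?_ ?_
  · rw [hsplit]
    simp [List.append_assoc]
  · simpa [List.append_assoc] using (show IsPrefixNormal1 (u ++ x ++ z) from h0)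
  · simpa [List.append_assoc] using
      (show IsPrefixNormal1 (u ++ v ++ v ++ x ++ y ++ y ++ z) from h2)
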